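/- Gauge transformations preserve the equilibrium relations: if Δ′(T,P,μ) := Δ(T,P, μ − μ_U − T·μ_S), μ′ := μ + μ_U + T·μ_S, U′ := U + μ_U·n, S′ := S − μ_S·n, then Δ′(T,P,μ′) = Δ(T,P,μ); moreover S′ = Ω ∂Δ′/∂T(T,P,μ′) and n = Ω ∂Δ′/∂μ(T,P,μ′) whenever S = Ω ∂Δ/∂T(T,P,μ) and n = Ω ∂Δ/∂μ(T,P,μ), and the Euler equation U′ = T·S′ − P·V + μ′·n holds iff U = T·S − P·V + μ·n. -/

import Mathlib

/-- Gauge transformations preserve the equilibrium relations: with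
`Δ′(T,P,μ) := Δ(T,P,μ - μ_U - T·μ_S)`, `μ′ := μ + μ_U + T·μ_S`,
`U′ := U + μ_U·n`, `S′ := S - μ_S·n`, one has `Δ′(T,P,μ′) = Δ(T,P,μ)`;
moreover `S′ = Ω ∂Δ′/∂T(T,P,μ′)` and `n = Ω ∂Δ′/∂μ(T,P,μ′)` whenever
`S = Ω ∂Δ/∂T(T,P,μ)` and `n = Ω ∂Δ/∂μ(T,P,μ)`, and the Euler equation
`U′ = T·S′ - P·V + μ′·n` holds iff `U = T·S - P·V + μ·n`. -/
theorem gauge_transformation_equilibrium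
    {J : Type*} [Fintype J] [DecidableEq J]
    (Δ : ℝ × ℝ × (J → ℝ) → ℝ) (hΔ : Differentiable ℝ Δ)
    (μU μS : J → ℝ) (Ω : ℝ) (hΩ : 0 < Ω)
    (Δ' : ℝ × ℝ × (J → ℝ) → ℝ)
    (hΔ' : ∀ x : ℝ × ℝ × (J → ℝ), Δ' x = Δ (x.1, x.2.1, x.2.2 - μU - x.1 • μS))
    (T P S U V : ℝ) (μ n : J → ℝ)
    (μ' : J → ℝ) (hμ' : μ' = fun j => μ j + μU j + T * μS j)
    (U' : ℝ) (hU' : U' = U + ∑ j, μU j * n j)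
    (S' : ℝ) (hS' : S' = S - ∑ j, μS j * n j) :
    Δ' (T, P, μ') = Δ (T, P, μ) ∧
    ((S = Ω * fderiv ℝ Δ (T, P, μ) (1, 0, 0) ∧
      (∀ j, n j = Ω * fderiv ℝ Δ (T, P, μ) (0, 0, Pi.single j 1))) →
     (S' = Ω * fderiv ℝ Δ' (T, P, μ') (1, 0, 0) ∧
      (∀ j, n j = Ω * fderiv ℝ Δ' (T, P, μ') (0, 0, Pi.single j 1)))) ∧
    ((U' = T * S' - P * V + ∑ j, μ' j * n j) ↔
     (U = T * S - P * V + ∑ j, μ j * n j)) := by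
  let L : (ℝ × ℝ × (J → ℝ)) →L[ℝ] (ℝ × ℝ × (J → ℝ)) :=
    (ContinuousLinearMap.fst ℝ ℝ (ℝ × (J → ℝ))).prod
      (((ContinuousLinearMap.fst ℝ ℝ (J → ℝ)).comp
          (ContinuousLinearMap.snd ℝ ℝ (ℝ × (J → ℝ)))).prod
       (((ContinuousLinearMap.snd ℝ ℝ (J → ℝ)).comp
          (ContinuousLinearMap.snd ℝ ℝ (ℝ × (J → ℝ)))) -
        (ContinuousLinearMap.fst ℝ ℝ (ℝ × (J → ℝ))).smulRight μS))
  have hL : ∀ x : ℝ × ℝ × (J → ℝ), L x = (x.1, x.2.1, x.2.2 - x.1 • μS) := fun x => rfl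
  set c : ℝ × ℝ × (J → ℝ) := ((0 : ℝ), (0 : ℝ), -μU) with hc
  have hfun : Δ' = fun x => Δ (L x + c) := by
    funext x
    rw [hΔ', hL]
    congr 1
    refine Prod.ext (by simp [hc]) (Prod.ext (by simp [hc]) ?_)
    show x.2.2 - μU - x.1 • μS = (x.2.2 - x.1 • μS) + (-μU)
    funext j; simp [sub_eq_add_neg]; ring
  have key : ∀ x : ℝ × ℝ × (J → ℝ),
      fderiv ℝ Δ' x = (fderiv ℝ Δ (L x + c)).comp L := by
    intro x
    rw [hfun]
    rw [show (fun x => Δ (L x + c)) = Δ ∘ (fun x => L x + c) from rfl]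
    rw [fderiv_comp x (hΔ.differentiableAt)
      ((L.differentiable.add_const c).differentiableAt)]
    congr 1
    rw [fderiv_add_const, L.fderiv]
  have hLpt : L (T, P, μ') + c = (T, P, μ) := by
    rw [hL]
    refine Prod.ext (by simp [hc]) (Prod.ext (by simp [hc]) ?_)
    show μ' - T • μS + (-μU) = μ
    funext j
    simp only [hμ', Pi.sub_apply, Pi.add_apply, Pi.neg_apply, Pi.smul_apply, smul_eq_mul]
    ring
  have keyT : fderiv ℝ Δ' (T, P, μ') = (fderiv ℝ Δ (T, P, μ)).comp L := by
    rw [key, hLpt]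
  refine ⟨?_, ?_, ?_⟩
  · rw [hΔ']
    show Δ (T, P, μ' - μU - T • μS) = Δ (T, P, μ)
    have : μ' - μU - T • μS = μ := by funext j; simp [hμ']; ring
    rw [this]
  · rintro ⟨hS0, hn0⟩
    set D := fderiv ℝ Δ (T, P, μ) with hD
    have hdir : ∀ j, (L ((0 : ℝ), (0 : ℝ), (Pi.single j 1 : J → ℝ))) =
        ((0 : ℝ), (0 : ℝ), (Pi.single j 1 : J → ℝ)) := by
      intro j; rw [hL]; simp
    have hnn : ∀ j, n j = Ω * fderiv ℝ Δ' (T, P, μ') (0, 0, Pi.single j 1) := by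
      intro j
      rw [keyT, ContinuousLinearMap.comp_apply, hdir j]
      exact hn0 j
    refine ⟨?_, hnn⟩
    have h3 : -μS = ∑ j, (-(μS j)) • (Pi.single j 1 : J → ℝ) := by
      funext j'
      simp [Finset.sum_apply, Pi.single_apply, mul_ite]
    have hsum : ((0 : ℝ), (0 : ℝ), -μS) =
        ∑ j, (-(μS j)) • (((0 : ℝ), (0 : ℝ), (Pi.single j 1 : J → ℝ))) := by
      simp only [Prod.smul_mk, smul_zero]
      rw [h3]
      exact Prod.ext (by simp [Prod.fst_sum]) (Prod.ext (by simp [Prod.fst_sum, Prod.snd_sum])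
        (by simp [Prod.snd_sum]))
    have hdecomp : ((1 : ℝ), (0 : ℝ), -μS) =
        ((1 : ℝ), (0 : ℝ), (0 : J → ℝ)) + ((0 : ℝ), (0 : ℝ), -μS) := by
      simp
    have hL1 : L ((1 : ℝ), (0 : ℝ), (0 : J → ℝ)) = ((1 : ℝ), (0 : ℝ), -μS) := by
      rw [hL]; simp
    rw [hS', keyT, ContinuousLinearMap.comp_apply, hL1, hdecomp, map_add, hsum, map_sum]
    simp only [map_smul, smul_eq_mul]
    have hrhs : ∑ i, Ω * (-(μS i) * D ((0 : ℝ), (0 : ℝ), (Pi.single i 1 : J → ℝ))) =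
        -(∑ j, μS j * n j) := by
      rw [← Finset.sum_neg_distrib]
      exact Finset.sum_congr rfl fun j _ => by rw [hn0 j]; ring
    rw [mul_add, Finset.mul_sum, hrhs, hS0]
    ring
  · have hexp : ∑ j, μ' j * n j =
        (∑ j, μ j * n j) + (∑ j, μU j * n j) + T * ∑ j, μS j * n j := by
      rw [hμ', Finset.mul_sum, ← Finset.sum_add_distrib, ← Finset.sum_add_distrib]
      exact Finset.sum_congr rfl (fun j _ => by ring)
    rw [hU', hS', hexp]
    constructor <;> intro h <;> linarith
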